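/- arXiv:1305.4893 — 2 statements merged into one kernel-verified Lean document; each statement's English description precedes it below -/
import Mathlib

section
/- Let A and B be m×n real matrices with equal rank, and let A† and B† denote their Moore–Penrose pseudo-inverses. Then ‖A† − B†‖ ≤ ((1+√5)/2)·‖A†‖·‖B†‖·‖A − B‖, where ‖·‖ is the operator (spectral) norm. -/
open Matrix Module
open scoped Matrix.Norms.L2Operator RealInnerProductSpace

noncomputable def opNorm {m n : ℕ} (M : Matrix (Fin m) (Fin n) ℝ) : ℝ :=
  ‖LinearMap.toContinuousLinearMap (Matrix.toEuclideanLin M)‖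

def IsMoorePenrose {m n : ℕ} (A : Matrix (Fin m) (Fin n) ℝ)
    (Ad : Matrix (Fin n) (Fin m) ℝ) : Prop :=
  A * Ad * A = A ∧ Ad * A * Ad = Ad ∧ (A * Ad)ᵀ = A * Ad ∧ (Ad * A)ᵀ = Ad * A

namespace Wedin

variable {l m n : ℕ}

noncomputable def TL (M : Matrix (Fin m) (Fin n) ℝ) :
    EuclideanSpace ℝ (Fin n) →L[ℝ] EuclideanSpace ℝ (Fin m) :=
  LinearMap.toContinuousLinearMap (Matrix.toEuclideanLin M)

lemma opNorm_eq (M : Matrix (Fin m) (Fin n) ℝ) : opNorm M = ‖M‖ := rfl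

lemma norm_TL (M : Matrix (Fin m) (Fin n) ℝ) : ‖TL M‖ = ‖M‖ := rfl

lemma TL_apply (M : Matrix (Fin m) (Fin n) ℝ) (x : EuclideanSpace ℝ (Fin n)) :
    TL M x = (WithLp.equiv 2 (Fin m → ℝ)).symm (M *ᵥ (WithLp.equiv 2 (Fin n → ℝ)) x) := by
  simp [TL, Matrix.toEuclideanLin_apply]

lemma TL_mul (M : Matrix (Fin m) (Fin n) ℝ) (N : Matrix (Fin n) (Fin l) ℝ) :
    TL (M * N) = (TL M).comp (TL N) := by
  ext x; simp [TL_apply, Matrix.mulVec_mulVec]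

lemma TL_add (M N : Matrix (Fin m) (Fin n) ℝ) : TL (M + N) = TL M + TL N := by
  ext x; simp [TL_apply, Matrix.add_mulVec]

lemma TL_zero : TL (0 : Matrix (Fin m) (Fin n) ℝ) = 0 := by
  ext x; simp [TL_apply]

lemma TL_sub (M N : Matrix (Fin m) (Fin n) ℝ) : TL (M - N) = TL M - TL N := by
  ext x; simp [TL_apply, Matrix.sub_mulVec]

lemma TL_one : TL (1 : Matrix (Fin m) (Fin m) ℝ) = ContinuousLinearMap.id ℝ _ := by
  ext x; simp [TL_apply]

lemma TL_one_sub (M : Matrix (Fin m) (Fin m) ℝ) (x : EuclideanSpace ℝ (Fin m)) :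
    TL (1 - M) x = x - TL M x := by
  rw [TL_sub, TL_one]; rfl

lemma inner_TL_left (M : Matrix (Fin m) (Fin n) ℝ) (x : EuclideanSpace ℝ (Fin n))
    (y : EuclideanSpace ℝ (Fin m)) : ⟪TL M x, y⟫ = ⟪x, TL Mᵀ y⟫ := by
  have h : (Mᵀ : Matrix (Fin n) (Fin m) ℝ) = Mᴴ :=
    (Matrix.conjTranspose_eq_transpose_of_trivial M).symm
  rw [show TL Mᵀ y = Matrix.toEuclideanLin Mᵀ y from rfl,
    show TL M x = Matrix.toEuclideanLin M x from rfl, h,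
    Matrix.toEuclideanLin_conjTranspose_eq_adjoint, LinearMap.adjoint_inner_right]

lemma TL_le (M : Matrix (Fin m) (Fin n) ℝ) (x : EuclideanSpace ℝ (Fin n)) :
    ‖TL M x‖ ≤ ‖M‖ * ‖x‖ := (TL M).le_opNorm x

lemma norm_transpose (M : Matrix (Fin m) (Fin n) ℝ) : ‖Mᵀ‖ = ‖M‖ := by
  rw [show (Mᵀ : Matrix (Fin n) (Fin m) ℝ) = Mᴴ from
    (Matrix.conjTranspose_eq_transpose_of_trivial M).symm]
  exact Matrix.l2_opNorm_conjTranspose M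

section ProjLemmas
variable {P : Matrix (Fin m) (Fin m) ℝ} (hs : Pᵀ = P) (h2 : P * P = P)
include hs h2

lemma inner_proj_self (x : EuclideanSpace ℝ (Fin m)) :
    ⟪TL P x, TL P x⟫ = ⟪x, TL P x⟫ := by
  rw [inner_TL_left, hs, ← ContinuousLinearMap.comp_apply, ← TL_mul, h2]

lemma norm_proj_apply_le (x : EuclideanSpace ℝ (Fin m)) : ‖TL P x‖ ≤ ‖x‖ := by
  have h1 : ‖TL P x‖ ^ 2 = ⟪x, TL P x⟫ := by
    rw [← inner_proj_self hs h2, real_inner_self_eq_norm_sq]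
  have h3 : ⟪x, TL P x⟫ ≤ ‖x‖ * ‖TL P x‖ := real_inner_le_norm _ _
  rcases eq_or_lt_of_le (norm_nonneg (TL P x)) with hz | hz
  · rw [← hz]; exact norm_nonneg x
  · nlinarith

lemma norm_proj_le : ‖P‖ ≤ 1 := by
  rw [← norm_TL]
  refine ContinuousLinearMap.opNorm_le_bound _ zero_le_one (fun x => ?_)
  rw [one_mul]; exact norm_proj_apply_le hs h2 x

lemma proj_pythagoras (z : EuclideanSpace ℝ (Fin m)) :
    ‖z‖ ^ 2 = ‖TL P z‖ ^ 2 + ‖z - TL P z‖ ^ 2 := by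
  have h1 := norm_sub_sq_real z (TL P z)
  have h2' : ‖TL P z‖ ^ 2 = ⟪z, TL P z⟫ := by
    rw [← inner_proj_self hs h2, real_inner_self_eq_norm_sq]
  have := real_inner_comm z (TL P z)
  nlinarith [h1]

omit hs in
lemma mem_range_fixed {x : EuclideanSpace ℝ (Fin m)}
    (hx : x ∈ LinearMap.range (Matrix.toEuclideanLin P)) : TL P x = x := by
  obtain ⟨z, rfl⟩ := hx
  rw [show Matrix.toEuclideanLin P z = TL P z from rfl, ← ContinuousLinearMap.comp_apply,
    ← TL_mul, h2]

end ProjLemmas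

lemma one_sub_proj_sym {Q : Matrix (Fin m) (Fin m) ℝ} (hQs : Qᵀ = Q) :
    (1 - Q)ᵀ = 1 - Q := by
  rw [Matrix.transpose_sub, Matrix.transpose_one, hQs]

lemma one_sub_proj_idem {Q : Matrix (Fin m) (Fin m) ℝ} (hQ2 : Q * Q = Q) :
    (1 - Q) * (1 - Q) = 1 - Q := by
  rw [sub_mul, one_mul, mul_sub, mul_one, hQ2]; abel

lemma finrank_range_TL (M : Matrix (Fin m) (Fin n) ℝ) :
    finrank ℝ (LinearMap.range (Matrix.toEuclideanLin M)) = M.rank := by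
  have hrange : LinearMap.range (Matrix.toEuclideanLin M)
      = Submodule.map (WithLp.linearEquiv 2 ℝ (Fin m → ℝ)).symm.toLinearMap
          (LinearMap.range M.mulVecLin) := by
    ext x
    simp only [LinearMap.mem_range, Submodule.mem_map, Matrix.toEuclideanLin_apply,
      Matrix.mulVecLin_apply]
    constructor
    · rintro ⟨y, rfl⟩
      exact ⟨M *ᵥ (WithLp.equiv 2 (Fin n → ℝ)) y, ⟨_, rfl⟩, rfl⟩
    · rintro ⟨z, ⟨y, rfl⟩, rfl⟩
      exact ⟨(WithLp.equiv 2 (Fin n → ℝ)).symm y, by simp⟩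
  rw [hrange]
  simpa [Matrix.rank] using LinearEquiv.finrank_map_eq
    (WithLp.linearEquiv 2 ℝ (Fin m → ℝ)).symm (LinearMap.range M.mulVecLin)

set_option maxHeartbeats 2000000 in
lemma flip (P Q : Matrix (Fin m) (Fin m) ℝ)
    (hPs : Pᵀ = P) (hP2 : P * P = P) (hQs : Qᵀ = Q) (hQ2 : Q * Q = Q)
    (hr : finrank ℝ (LinearMap.range (Matrix.toEuclideanLin P))
        = finrank ℝ (LinearMap.range (Matrix.toEuclideanLin Q)))
    {t : ℝ} (ht0 : 0 ≤ t) (h : ‖(1 - P) * Q‖ ≤ t) : ‖(1 - Q) * P‖ ≤ t := by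
  by_cases h1 : 1 ≤ t
  · calc ‖(1 - Q) * P‖ ≤ ‖(1 - Q)‖ * ‖P‖ := Matrix.l2_opNorm_mul _ _
      _ ≤ 1 * 1 := by
          refine mul_le_mul (norm_proj_le (one_sub_proj_sym hQs) (one_sub_proj_idem hQ2))
            (norm_proj_le hPs hP2) (norm_nonneg _) zero_le_one
      _ ≤ t := by linarith
  push_neg at h1
  have hst : 0 < 1 - t ^ 2 := by nlinarith
  have key1 : ∀ q ∈ LinearMap.range (Matrix.toEuclideanLin Q),
      (1 - t ^ 2) * ‖q‖ ^ 2 ≤ ‖TL P q‖ ^ 2 := by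
    intro q hq
    have hfix : TL Q q = q := mem_range_fixed hQ2 hq
    have hsub : ‖q - TL P q‖ ≤ t * ‖q‖ := by
      have e1 : q - TL P q = TL ((1 - P) * Q) q := by
        rw [TL_mul, ContinuousLinearMap.comp_apply, hfix, TL_one_sub]
      rw [e1]
      calc ‖TL ((1 - P) * Q) q‖ ≤ ‖TL ((1 - P) * Q)‖ * ‖q‖ := ContinuousLinearMap.le_opNorm _ _
        _ ≤ t * ‖q‖ := by
            rw [norm_TL]; exact mul_le_mul_of_nonneg_right h (norm_nonneg _)
    have hpy := proj_pythagoras hPs hP2 q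
    nlinarith [norm_nonneg (q - TL P q), norm_nonneg q]
  set U := LinearMap.range (Matrix.toEuclideanLin P) with hU
  set V := LinearMap.range (Matrix.toEuclideanLin Q) with hV
  have hmem : ∀ v : V, Matrix.toEuclideanLin P (v : EuclideanSpace ℝ (Fin m)) ∈ U :=
    fun v => LinearMap.mem_range_self _ _
  set φ : V →ₗ[ℝ] U :=
    LinearMap.codRestrict U ((Matrix.toEuclideanLin P).comp V.subtype) hmem with hφ
  have hinj : Function.Injective φ := by
    rw [← LinearMap.ker_eq_bot]
    rw [LinearMap.ker_eq_bot']
    intro v hv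
    have h0 : Matrix.toEuclideanLin P (v : EuclideanSpace ℝ (Fin m)) = 0 := by
      have := congrArg (Subtype.val) hv
      exact this
    have := key1 v v.2
    rw [show Matrix.toEuclideanLin P (v : EuclideanSpace ℝ (Fin m)) = TL P v from rfl] at h0
    rw [h0] at this
    have this2 : (1 - t ^ 2) * ‖(v : EuclideanSpace ℝ (Fin m))‖ ^ 2 ≤ 0 := by simpa using this
    have hv0 : ‖(v : EuclideanSpace ℝ (Fin m))‖ = 0 := by
      by_contra hne
      have hpos : 0 < ‖(v : EuclideanSpace ℝ (Fin m))‖ :=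
        lt_of_le_of_ne (norm_nonneg _) (Ne.symm hne)
      have := mul_pos hst (pow_pos hpos 2)
      linarith
    ext1
    simpa using norm_eq_zero.mp hv0
  have hsurj : Function.Surjective φ :=
    (LinearMap.injective_iff_surjective_of_finrank_eq_finrank hr.symm).mp hinj
  have key2 : ∀ p ∈ U, (1 - t ^ 2) * ‖p‖ ^ 2 ≤ ‖TL Q p‖ ^ 2 := by
    intro p hp
    by_cases hp0 : p = 0
    · simp [hp0]
    obtain ⟨v, hv⟩ := hsurj ⟨p, hp⟩
    have hq : Matrix.toEuclideanLin P (v : EuclideanSpace ℝ (Fin m)) = p :=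
      congrArg Subtype.val hv
    set q : EuclideanSpace ℝ (Fin m) := (v : EuclideanSpace ℝ (Fin m)) with hqdef
    have hPq : TL P q = p := hq
    have hqV : q ∈ V := v.2
    have c1 : ⟪TL Q p, q⟫ = ‖p‖ ^ 2 := by
      rw [inner_TL_left, hQs, mem_range_fixed hQ2 hqV]
      have : (⟪p, q⟫ : ℝ) = ⟪TL P p, q⟫ := by rw [mem_range_fixed hP2 hp]
      rw [this, inner_TL_left, hPs, hPq, real_inner_self_eq_norm_sq]
    have c2 : ‖p‖ ^ 2 ≤ ‖TL Q p‖ * ‖q‖ := c1 ▸ real_inner_le_norm _ _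
    have c3 : (1 - t ^ 2) * ‖q‖ ^ 2 ≤ ‖p‖ ^ 2 := by
      have := key1 q hqV
      rwa [show TL P q = p from hPq] at this
    have hpn : 0 < ‖p‖ := norm_pos_iff.mpr hp0
    have e1 : ‖p‖ ^ 2 * ‖p‖ ^ 2 ≤ (‖TL Q p‖ * ‖q‖) * (‖TL Q p‖ * ‖q‖) :=
      mul_self_le_mul_self (sq_nonneg ‖p‖) c2
    have e2 := mul_le_mul_of_nonneg_left e1 (le_of_lt hst)
    have e3 : ‖TL Q p‖ ^ 2 * ((1 - t ^ 2) * ‖q‖ ^ 2) ≤ ‖TL Q p‖ ^ 2 * ‖p‖ ^ 2 :=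
      mul_le_mul_of_nonneg_left c3 (sq_nonneg _)
    nlinarith [e2, e3, pow_pos hpn 2]
  rw [← norm_TL]
  refine ContinuousLinearMap.opNorm_le_bound _ ht0 (fun x => ?_)
  have e1 : TL ((1 - Q) * P) x = TL P x - TL Q (TL P x) := by
    rw [TL_mul, ContinuousLinearMap.comp_apply, TL_one_sub]
  set p := TL P x with hp
  have hpU : p ∈ U := LinearMap.mem_range_self _ _
  have hpy := proj_pythagoras hQs hQ2 p
  have hk := key2 p hpU
  have hb : ‖p - TL Q p‖ ^ 2 ≤ (t * ‖p‖) ^ 2 := by nlinarith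
  have hb' : ‖p - TL Q p‖ ≤ t * ‖p‖ :=
    le_of_pow_le_pow_left₀ two_ne_zero (by positivity) hb
  calc ‖TL ((1 - Q) * P) x‖ = ‖p - TL Q p‖ := by rw [e1]
    _ ≤ t * ‖p‖ := hb'
    _ ≤ t * ‖x‖ := mul_le_mul_of_nonneg_left (norm_proj_apply_le hPs hP2 x) ht0

lemma scalar_step {s k a b G W L X : ℝ} (h5 : s ^ 2 = 5) (hs1 : 1 < s) (hk0 : 0 ≤ k)
    (hGa : G ≤ k * a + k * b) (hWa : W ≤ k * a) (hG0 : 0 ≤ G) (hW0 : 0 ≤ W)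
    (ha : 0 ≤ a) (hb : 0 ≤ b) (hL : L ^ 2 = G ^ 2 + W ^ 2) (hL0 : 0 ≤ L)
    (hX : X ^ 2 = a ^ 2 + b ^ 2) (hX0 : 0 ≤ X) :
    L ≤ (1 + s) / 2 * k * X := by
  have hs0 : (0 : ℝ) ≤ (1 + s) / 2 := by linarith
  have hψsq : ((1 + s) / 2) ^ 2 = (3 + s) / 2 := by field_simp; nlinarith
  have hG2 : G ^ 2 ≤ (k * a + k * b) ^ 2 := by nlinarith
  have hW2 : W ^ 2 ≤ (k * a) ^ 2 := by nlinarith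
  have claim : 2 * ((a + b) ^ 2 + a ^ 2) ≤ (3 + s) * (a ^ 2 + b ^ 2) := by
    nlinarith [sq_nonneg ((s - 1) * a - 2 * b)]
  have key : L ^ 2 ≤ ((1 + s) / 2 * k * X) ^ 2 := by
    have e : ((1 + s) / 2 * k * X) ^ 2 = ((1 + s) / 2) ^ 2 * k ^ 2 * X ^ 2 := by ring
    rw [e, hψsq, hX, hL]
    nlinarith [mul_le_mul_of_nonneg_left claim (sq_nonneg k)]
  refine le_of_pow_le_pow_left₀ two_ne_zero ?_ key
  exact mul_nonneg (mul_nonneg hs0 hk0) hX0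

set_option maxHeartbeats 2000000 in
lemma wedin_aux (A B : Matrix (Fin m) (Fin n) ℝ) (Ad Bd : Matrix (Fin n) (Fin m) ℝ)
    (hA : IsMoorePenrose A Ad) (hB : IsMoorePenrose B Bd)
    (hrank : A.rank = B.rank) (hw : ‖Bd‖ ≤ ‖Ad‖) :
    ‖Ad - Bd‖ ≤ (1 + Real.sqrt 5) / 2 * ‖Ad‖ * ‖Bd‖ * ‖A - B‖ := by
  obtain ⟨hA1, hA2, hA3, hA4⟩ := hA
  obtain ⟨hB1, hB2, hB3, hB4⟩ := hB
  have hAd : Ad * (A * Ad) = Ad := by rw [← Matrix.mul_assoc, hA2]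
  have hBd : Bd * (B * Bd) = Bd := by rw [← Matrix.mul_assoc, hB2]
  have hπ : (B * Bd) * (B * Bd) = B * Bd := by rw [Matrix.mul_assoc B Bd (B * Bd), hBd]
  have hρ : (Ad * A) * (Ad * A) = Ad * A := by
    rw [Matrix.mul_assoc Ad A (Ad * A), ← Matrix.mul_assoc A Ad A, hA1]
  have hπA : (A * Ad) * (A * Ad) = A * Ad := by rw [Matrix.mul_assoc A Ad (A * Ad), hAd]
  set T1 := -(Ad * (A - B) * Bd) with hT1
  set T2 := Ad * (1 - B * Bd) with hT2
  set T3 := -((1 - Ad * A) * Bd) with hT3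
  have hdecomp : Ad - Bd = T1 + T2 + T3 := by
    rw [hT1, hT2, hT3]
    simp only [Matrix.mul_sub, Matrix.sub_mul, Matrix.mul_one, Matrix.one_mul, Matrix.mul_assoc]
    abel
  have f1 : T1 * (B * Bd) = T1 := by
    rw [hT1, Matrix.neg_mul, Matrix.mul_assoc (Ad * (A - B)) Bd (B * Bd), hBd]
  have f2 : T3 * (B * Bd) = T3 := by
    rw [hT3, Matrix.neg_mul, Matrix.mul_assoc (1 - Ad * A) Bd (B * Bd), hBd]
  have f3 : T2 * (B * Bd) = 0 := by
    rw [hT2, Matrix.mul_assoc, Matrix.sub_mul, Matrix.one_mul, hπ, sub_self, Matrix.mul_zero]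
  have f4 : (Ad * A) * T1 = T1 := by
    rw [hT1, Matrix.mul_neg, Matrix.mul_assoc Ad (A - B) Bd,
      ← Matrix.mul_assoc (Ad * A) Ad ((A - B) * Bd), hA2, ← Matrix.mul_assoc Ad (A - B) Bd]
  have f5 : (Ad * A) * T2 = T2 := by
    rw [hT2, ← Matrix.mul_assoc, hA2]
  have f6 : (Ad * A) * T3 = 0 := by
    have hz : (Ad * A) * (1 - Ad * A) = 0 := by
      rw [Matrix.mul_sub, Matrix.mul_one, hρ, sub_self]
    rw [hT3, Matrix.mul_neg, ← Matrix.mul_assoc, hz, Matrix.zero_mul, neg_zero]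
  have eflip : (1 - A * Ad) * (B * Bd) = -((1 - A * Ad) * (A - B) * Bd) := by
    have e2 : (1 - A * Ad) * (A * Bd) = 0 := by
      rw [Matrix.sub_mul, Matrix.one_mul, ← Matrix.mul_assoc, hA1, sub_self]
    have e3 : (1 - A * Ad) * (B * Bd)
        = (1 - A * Ad) * (A * Bd) - (1 - A * Ad) * ((A - B) * Bd) := by
      simp only [Matrix.mul_sub, Matrix.sub_mul, Matrix.mul_one, Matrix.one_mul,
        Matrix.mul_assoc]
      abel
    rw [e3, e2, zero_sub, ← Matrix.mul_assoc]
  have eT2 : T2 = Ad * ((A * Ad) * (1 - B * Bd)) := by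
    rw [hT2, ← Matrix.mul_assoc, hAd]
  have eT3 : T3 = -((1 - Ad * A) * (Bd * B) * Bd) := by
    rw [hT3, Matrix.mul_assoc (1 - Ad * A) (Bd * B) Bd, Matrix.mul_assoc Bd B Bd, hBd]
  have eQB : (Bd * B) * (1 - Ad * A) = -((Bd * (A - B)) * (1 - Ad * A)) := by
    have hz : A * (1 - Ad * A) = 0 := by
      rw [Matrix.mul_sub, Matrix.mul_one, ← Matrix.mul_assoc, hA1, sub_self]
    have e4 : (Bd * (A - B)) * (1 - Ad * A)
        = Bd * (A * (1 - Ad * A)) - (Bd * B) * (1 - Ad * A) := by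
      simp only [Matrix.mul_sub, Matrix.sub_mul, Matrix.mul_one, Matrix.one_mul,
        Matrix.mul_assoc]
      abel
    rw [e4, hz, Matrix.mul_zero, zero_sub, neg_neg]
  -- norm bounds
  set κ := ‖Ad‖ * ‖A - B‖ * ‖Bd‖ with hκ
  have hκ0 : 0 ≤ κ := by positivity
  have nT1 : ‖T1‖ ≤ κ := by
    rw [hT1, norm_neg]
    calc ‖Ad * (A - B) * Bd‖ ≤ ‖Ad * (A - B)‖ * ‖Bd‖ := Matrix.l2_opNorm_mul _ _
      _ ≤ (‖Ad‖ * ‖A - B‖) * ‖Bd‖ :=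
          mul_le_mul_of_nonneg_right (Matrix.l2_opNorm_mul _ _) (norm_nonneg _)
  have hrk : finrank ℝ (LinearMap.range (Matrix.toEuclideanLin (A * Ad)))
      = finrank ℝ (LinearMap.range (Matrix.toEuclideanLin (B * Bd))) := by
    rw [finrank_range_TL, finrank_range_TL]
    have r1 : (A * Ad).rank = A.rank := by
      refine le_antisymm (Matrix.rank_mul_le_left A Ad) ?_
      calc A.rank = ((A * Ad) * A).rank := by rw [hA1]
        _ ≤ (A * Ad).rank := Matrix.rank_mul_le_left _ _
    have r2 : (B * Bd).rank = B.rank := by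
      refine le_antisymm (Matrix.rank_mul_le_left B Bd) ?_
      calc B.rank = ((B * Bd) * B).rank := by rw [hB1]
        _ ≤ (B * Bd).rank := Matrix.rank_mul_le_left _ _
    rw [r1, r2, hrank]
  have hflip : ‖(1 - B * Bd) * (A * Ad)‖ ≤ ‖A - B‖ * ‖Bd‖ := by
    apply flip (A * Ad) (B * Bd) hA3 hπA hB3 hπ hrk (by positivity)
    rw [eflip, norm_neg]
    calc ‖(1 - A * Ad) * (A - B) * Bd‖ ≤ ‖(1 - A * Ad) * (A - B)‖ * ‖Bd‖ :=
          Matrix.l2_opNorm_mul _ _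
      _ ≤ (‖(1 : Matrix (Fin m) (Fin m) ℝ) - A * Ad‖ * ‖A - B‖) * ‖Bd‖ :=
          mul_le_mul_of_nonneg_right (Matrix.l2_opNorm_mul _ _) (norm_nonneg _)
      _ ≤ (1 * ‖A - B‖) * ‖Bd‖ := by
          have h1 := norm_proj_le (one_sub_proj_sym hA3) (one_sub_proj_idem hπA)
          have := mul_le_mul_of_nonneg_right h1 (norm_nonneg (A - B))
          exact mul_le_mul_of_nonneg_right this (norm_nonneg Bd)
      _ = ‖A - B‖ * ‖Bd‖ := by rw [one_mul]
  have nT2 : ‖T2‖ ≤ κ := by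
    rw [eT2]
    have htr : (A * Ad) * (1 - B * Bd) = ((1 - B * Bd) * (A * Ad))ᵀ := by
      rw [Matrix.transpose_mul, one_sub_proj_sym hB3, hA3]
    calc ‖Ad * ((A * Ad) * (1 - B * Bd))‖ ≤ ‖Ad‖ * ‖(A * Ad) * (1 - B * Bd)‖ :=
          Matrix.l2_opNorm_mul _ _
      _ = ‖Ad‖ * ‖(1 - B * Bd) * (A * Ad)‖ := by rw [htr, norm_transpose]
      _ ≤ ‖Ad‖ * (‖A - B‖ * ‖Bd‖) := mul_le_mul_of_nonneg_left hflip (norm_nonneg _)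
      _ = κ := by rw [hκ]; ring
  have nT3 : ‖T3‖ ≤ κ := by
    rw [eT3, norm_neg]
    have h1 : ‖(1 - Ad * A) * (Bd * B)‖ ≤ ‖Bd‖ * ‖A - B‖ := by
      have htr : (1 - Ad * A) * (Bd * B) = ((Bd * B) * (1 - Ad * A))ᵀ := by
        rw [Matrix.transpose_mul, one_sub_proj_sym hA4, hB4]
      rw [htr, norm_transpose, eQB, norm_neg]
      calc ‖(Bd * (A - B)) * (1 - Ad * A)‖
          ≤ ‖Bd * (A - B)‖ * ‖(1 : Matrix (Fin n) (Fin n) ℝ) - Ad * A‖ :=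
            Matrix.l2_opNorm_mul _ _
        _ ≤ ‖Bd * (A - B)‖ * 1 :=
            mul_le_mul_of_nonneg_left
              (norm_proj_le (one_sub_proj_sym hA4) (one_sub_proj_idem hρ)) (norm_nonneg _)
        _ = ‖Bd * (A - B)‖ := mul_one _
        _ ≤ ‖Bd‖ * ‖A - B‖ := Matrix.l2_opNorm_mul _ _
    calc ‖(1 - Ad * A) * (Bd * B) * Bd‖ ≤ ‖(1 - Ad * A) * (Bd * B)‖ * ‖Bd‖ :=
          Matrix.l2_opNorm_mul _ _
      _ ≤ (‖Bd‖ * ‖A - B‖) * ‖Bd‖ := mul_le_mul_of_nonneg_right h1 (norm_nonneg _)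
      _ ≤ (‖Ad‖ * ‖A - B‖) * ‖Bd‖ := by
          have := mul_le_mul_of_nonneg_right hw (norm_nonneg (A - B))
          exact mul_le_mul_of_nonneg_right this (norm_nonneg Bd)
      _ = κ := rfl
  -- scalar facts
  have h5 : Real.sqrt 5 ^ 2 = 5 := Real.sq_sqrt (by norm_num)
  have h50 : (0 : ℝ) ≤ Real.sqrt 5 := Real.sqrt_nonneg 5
  have hs1 : (1 : ℝ) < Real.sqrt 5 := by nlinarith
  -- pointwise vector bound
  have hmain : ‖Ad - Bd‖ ≤ (1 + Real.sqrt 5) / 2 * κ := by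
    rw [← norm_TL]
    refine ContinuousLinearMap.opNorm_le_bound _ (by positivity) (fun x => ?_)
    set u := TL (B * Bd) x with hu
    set v := x - u with hv
    have hpyth : ‖x‖ ^ 2 = ‖u‖ ^ 2 + ‖v‖ ^ 2 := proj_pythagoras hB3 hπ x
    have h1u : TL T1 x = TL T1 u := by
      rw [hu, ← ContinuousLinearMap.comp_apply, ← TL_mul, f1]
    have h3u : TL T3 x = TL T3 u := by
      rw [hu, ← ContinuousLinearMap.comp_apply, ← TL_mul, f2]
    have h2u : TL T2 u = 0 := by
      rw [hu, ← ContinuousLinearMap.comp_apply, ← TL_mul, f3, TL_zero,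
        ContinuousLinearMap.zero_apply]
    have h2v : TL T2 x = TL T2 v := by
      rw [hv, map_sub, h2u, sub_zero]
    have hsum : TL (Ad - Bd) x = (TL T1 u + TL T2 v) + TL T3 u := by
      rw [hdecomp, TL_add, TL_add]
      simp only [ContinuousLinearMap.add_apply]
      rw [← h1u, ← h2v, ← h3u]
    set g := TL T1 u + TL T2 v with hg
    set w := TL T3 u with hw3
    have horth : ⟪g, w⟫ = 0 := by
      have hgfix : TL (Ad * A) g = g := by
        rw [hg, map_add,
          show TL (Ad * A) (TL T1 u) = TL ((Ad * A) * T1) u from by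
            rw [TL_mul (Ad * A) T1, ContinuousLinearMap.comp_apply],
          show TL (Ad * A) (TL T2 v) = TL ((Ad * A) * T2) v from by
            rw [TL_mul (Ad * A) T2, ContinuousLinearMap.comp_apply], f4, f5]
      have hwzero : TL (Ad * A) w = 0 := by
        rw [hw3,
          show TL (Ad * A) (TL T3 u) = TL ((Ad * A) * T3) u from by
            rw [TL_mul (Ad * A) T3, ContinuousLinearMap.comp_apply],
          f6, TL_zero, ContinuousLinearMap.zero_apply]
      calc ⟪g, w⟫ = ⟪TL (Ad * A) g, w⟫ := by rw [hgfix]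
        _ = ⟪g, TL (Ad * A)ᵀ w⟫ := inner_TL_left _ _ _
        _ = ⟪g, TL (Ad * A) w⟫ := by rw [hA4]
        _ = 0 := by rw [hwzero, inner_zero_right]
    have hnormsq : ‖TL (Ad - Bd) x‖ ^ 2 = ‖g‖ ^ 2 + ‖w‖ ^ 2 := by
      rw [hsum]
      have := norm_add_sq_real g w
      rw [horth] at this
      linarith
    have hgb : ‖g‖ ≤ κ * ‖u‖ + κ * ‖v‖ := by
      calc ‖g‖ ≤ ‖TL T1 u‖ + ‖TL T2 v‖ := norm_add_le _ _
        _ ≤ ‖T1‖ * ‖u‖ + ‖T2‖ * ‖v‖ := add_le_add (TL_le _ _) (TL_le _ _)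
        _ ≤ κ * ‖u‖ + κ * ‖v‖ := add_le_add
            (mul_le_mul_of_nonneg_right nT1 (norm_nonneg _))
            (mul_le_mul_of_nonneg_right nT2 (norm_nonneg _))
    have hwb : ‖w‖ ≤ κ * ‖u‖ :=
      le_trans (TL_le _ _) (mul_le_mul_of_nonneg_right nT3 (norm_nonneg _))
    exact scalar_step h5 hs1 hκ0 hgb hwb (norm_nonneg g) (norm_nonneg w)
      (norm_nonneg u) (norm_nonneg v) hnormsq (norm_nonneg _) hpyth (norm_nonneg x)
  calc ‖Ad - Bd‖ ≤ (1 + Real.sqrt 5) / 2 * κ := hmain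
    _ = (1 + Real.sqrt 5) / 2 * ‖Ad‖ * ‖Bd‖ * ‖A - B‖ := by rw [hκ]; ring

end Wedin

theorem stmt0 {m n : ℕ} (A B : Matrix (Fin m) (Fin n) ℝ)
    (Ad Bd : Matrix (Fin n) (Fin m) ℝ)
    (hA : IsMoorePenrose A Ad) (hB : IsMoorePenrose B Bd)
    (hrank : A.rank = B.rank) :
    opNorm (Ad - Bd) ≤ (1 + Real.sqrt 5) / 2 * opNorm Ad * opNorm Bd * opNorm (A - B) := by
  rw [Wedin.opNorm_eq, Wedin.opNorm_eq, Wedin.opNorm_eq, Wedin.opNorm_eq]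
  rcases le_total ‖Bd‖ ‖Ad‖ with h | h
  · exact Wedin.wedin_aux A B Ad Bd hA hB hrank h
  · have h2 := Wedin.wedin_aux B A Bd Ad hB hA hrank.symm h
    calc ‖Ad - Bd‖ = ‖Bd - Ad‖ := (norm_sub_rev _ _).symm
      _ ≤ (1 + Real.sqrt 5) / 2 * ‖Bd‖ * ‖Ad‖ * ‖B - A‖ := h2
      _ = (1 + Real.sqrt 5) / 2 * ‖Ad‖ * ‖Bd‖ * ‖A - B‖ := by rw [norm_sub_rev]; ring
end

section
/- Let Z, Z̃ ∈ ℝ^{n×d} have full column rank d. Then there exists an orthogonal matrix W ∈ ℝ^{d×d} such that ‖ZWᵀ − Z̃‖ ≤ ‖ZZᵀ − Z̃Z̃ᵀ‖ · (√‖ZZᵀ‖ + √‖Z̃Z̃ᵀ‖) / λ_d(Z̃Z̃ᵀ), where λ_d(Z̃Z̃ᵀ) is the d-th largest eigenvalue of Z̃Z̃ᵀ and ‖·‖ the spectral norm. -/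
open Matrix

namespace ProofAux

variable {m n p k : ℕ}

/-! ### Basic operator norm lemmas -/

lemma opNorm_nonneg (M : Matrix (Fin m) (Fin n) ℝ) : 0 ≤ opNorm M := norm_nonneg _

lemma le_opNorm (M : Matrix (Fin m) (Fin n) ℝ) (v : EuclideanSpace ℝ (Fin n)) :
    ‖Matrix.toEuclideanLin M v‖ ≤ opNorm M * ‖v‖ :=
  (LinearMap.toContinuousLinearMap (Matrix.toEuclideanLin M)).le_opNorm v

lemma opNorm_le_bound (M : Matrix (Fin m) (Fin n) ℝ) {c : ℝ} (hc : 0 ≤ c)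
    (h : ∀ v : EuclideanSpace ℝ (Fin n), ‖Matrix.toEuclideanLin M v‖ ≤ c * ‖v‖) :
    opNorm M ≤ c :=
  ContinuousLinearMap.opNorm_le_bound _ hc h

lemma toEuclideanLin_mul (A : Matrix (Fin m) (Fin n) ℝ) (B : Matrix (Fin n) (Fin p) ℝ)
    (v : EuclideanSpace ℝ (Fin p)) :
    Matrix.toEuclideanLin (A * B) v = Matrix.toEuclideanLin A (Matrix.toEuclideanLin B v) := by
  simp [Matrix.toEuclideanLin_apply, Matrix.mulVec_mulVec]

lemma opNorm_mul_le (A : Matrix (Fin m) (Fin n) ℝ) (B : Matrix (Fin n) (Fin p) ℝ) :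
    opNorm (A * B) ≤ opNorm A * opNorm B := by
  apply opNorm_le_bound _ (mul_nonneg (opNorm_nonneg A) (opNorm_nonneg B))
  intro v
  rw [toEuclideanLin_mul]
  calc ‖Matrix.toEuclideanLin A (Matrix.toEuclideanLin B v)‖
      ≤ opNorm A * ‖Matrix.toEuclideanLin B v‖ := le_opNorm _ _
    _ ≤ opNorm A * (opNorm B * ‖v‖) := by
        exact mul_le_mul_of_nonneg_left (le_opNorm _ _) (opNorm_nonneg A)
    _ = opNorm A * opNorm B * ‖v‖ := by ring

lemma opNorm_sub_le (A B : Matrix (Fin m) (Fin n) ℝ) :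
    opNorm (A - B) ≤ opNorm A + opNorm B := by
  unfold opNorm
  rw [map_sub, map_sub]
  exact norm_sub_le _ _

/-! ### Dot product / inner product conversions -/

lemma dot_transpose (M : Matrix (Fin m) (Fin n) ℝ) (x : Fin m → ℝ) (y : Fin n → ℝ) :
    (Mᵀ *ᵥ x) ⬝ᵥ y = x ⬝ᵥ (M *ᵥ y) := by
  rw [dotProduct_comm, Matrix.dotProduct_mulVec, Matrix.vecMul_transpose,
    dotProduct_comm]

lemma inner_eq_dot (x y : EuclideanSpace ℝ (Fin m)) :
    (inner ℝ x y : ℝ) = (fun i => x i) ⬝ᵥ (fun i => y i) := by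
  simp [PiLp.inner_apply, dotProduct, mul_comm]

lemma euclid_norm_sq (x : EuclideanSpace ℝ (Fin m)) :
    ‖x‖ ^ 2 = (fun i => x i) ⬝ᵥ (fun i => x i) := by
  rw [← real_inner_self_eq_norm_sq, inner_eq_dot]

lemma toEuclideanLin_coords (M : Matrix (Fin m) (Fin n) ℝ) (v : EuclideanSpace ℝ (Fin n)) :
    (fun i => (Matrix.toEuclideanLin M v) i) = M *ᵥ (fun j => v j) := by
  funext i
  simp [Matrix.toEuclideanLin_apply]

lemma norm_toEuclideanLin_sq (M : Matrix (Fin m) (Fin n) ℝ) (v : EuclideanSpace ℝ (Fin n)) :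
    ‖Matrix.toEuclideanLin M v‖ ^ 2 = (fun j => v j) ⬝ᵥ ((Mᵀ * M) *ᵥ (fun j => v j)) := by
  rw [euclid_norm_sq, toEuclideanLin_coords, ← Matrix.mulVec_mulVec, ← dot_transpose,
    dotProduct_comm]

lemma inner_toEuclideanLin (N : Matrix (Fin m) (Fin n) ℝ) (x : EuclideanSpace ℝ (Fin m))
    (y : EuclideanSpace ℝ (Fin n)) :
    (inner ℝ x (Matrix.toEuclideanLin N y) : ℝ) = (fun i => x i) ⬝ᵥ (N *ᵥ (fun j => y j)) := by
  rw [inner_eq_dot, toEuclideanLin_coords]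

lemma dot_mulVec_abs_le (M : Matrix (Fin m) (Fin m) ℝ) (u : Fin m → ℝ) :
    |u ⬝ᵥ (M *ᵥ u)| ≤ opNorm M * (u ⬝ᵥ u) := by
  set u' : EuclideanSpace ℝ (Fin m) := (WithLp.equiv 2 (Fin m → ℝ)).symm u with hu'
  have hcoords : (fun i => u' i) = u := rfl
  have h1 : (inner ℝ u' (Matrix.toEuclideanLin M u') : ℝ) = u ⬝ᵥ (M *ᵥ u) := by
    rw [inner_toEuclideanLin, hcoords]
  have h2 : ‖u'‖ ^ 2 = u ⬝ᵥ u := by rw [euclid_norm_sq, hcoords]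
  calc |u ⬝ᵥ (M *ᵥ u)| = |(inner ℝ u' (Matrix.toEuclideanLin M u') : ℝ)| := by rw [h1]
    _ ≤ ‖u'‖ * ‖Matrix.toEuclideanLin M u'‖ := abs_real_inner_le_norm _ _
    _ ≤ ‖u'‖ * (opNorm M * ‖u'‖) := by
        exact mul_le_mul_of_nonneg_left (le_opNorm _ _) (norm_nonneg _)
    _ = opNorm M * ‖u'‖ ^ 2 := by ring
    _ = opNorm M * (u ⬝ᵥ u) := by rw [h2]

/-! ### Transpose and C*-type norm lemmas -/

lemma opNorm_transpose_le (M : Matrix (Fin m) (Fin n) ℝ) : opNorm Mᵀ ≤ opNorm M := by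
  apply opNorm_le_bound _ (norm_nonneg _)
  intro x
  set y := Matrix.toEuclideanLin Mᵀ x with hy
  have key : ‖y‖ ^ 2 ≤ ‖x‖ * (opNorm M * ‖y‖) := by
    have h1 : ‖y‖ ^ 2 = (inner ℝ y y : ℝ) := (real_inner_self_eq_norm_sq y).symm
    have h2 : (inner ℝ y y : ℝ) = (inner ℝ x (Matrix.toEuclideanLin M y) : ℝ) := by
      rw [inner_eq_dot, inner_toEuclideanLin, hy, toEuclideanLin_coords, ← dot_transpose,
        Matrix.transpose_transpose]
      exact dotProduct_comm _ _
    calc ‖y‖ ^ 2 = (inner ℝ x (Matrix.toEuclideanLin M y) : ℝ) := by rw [h1, h2]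
      _ ≤ ‖x‖ * ‖Matrix.toEuclideanLin M y‖ := real_inner_le_norm _ _
      _ ≤ ‖x‖ * (opNorm M * ‖y‖) := by
          exact mul_le_mul_of_nonneg_left (le_opNorm _ _) (norm_nonneg _)
  show ‖y‖ ≤ opNorm M * ‖x‖
  rcases eq_or_lt_of_le (norm_nonneg y) with h0 | h0
  · rw [← h0]
    exact mul_nonneg (opNorm_nonneg M) (norm_nonneg x)
  · nlinarith [norm_nonneg x, norm_nonneg y]

lemma opNorm_transpose (M : Matrix (Fin m) (Fin n) ℝ) : opNorm Mᵀ = opNorm M := by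
  refine le_antisymm (opNorm_transpose_le M) ?_
  have := opNorm_transpose_le Mᵀ
  rwa [Matrix.transpose_transpose] at this

lemma opNorm_le_sqrt (M : Matrix (Fin m) (Fin n) ℝ) :
    opNorm M ≤ Real.sqrt (opNorm (M * Mᵀ)) := by
  rw [← opNorm_transpose]
  apply opNorm_le_bound _ (Real.sqrt_nonneg _)
  intro x
  have hsq : ‖Matrix.toEuclideanLin Mᵀ x‖ ^ 2 ≤ (Real.sqrt (opNorm (M * Mᵀ)) * ‖x‖) ^ 2 := by
    have h1 : ‖Matrix.toEuclideanLin Mᵀ x‖ ^ 2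
        = (fun i => x i) ⬝ᵥ ((M * Mᵀ) *ᵥ (fun i => x i)) := by
      rw [norm_toEuclideanLin_sq, Matrix.transpose_transpose]
    have h2 := dot_mulVec_abs_le (M * Mᵀ) (fun i => x i)
    have h3 : (fun i => x i) ⬝ᵥ (fun i => x i) = ‖x‖ ^ 2 := (euclid_norm_sq x).symm
    have h4 : (Real.sqrt (opNorm (M * Mᵀ)) * ‖x‖) ^ 2 = opNorm (M * Mᵀ) * ‖x‖ ^ 2 := by
      rw [mul_pow, Real.sq_sqrt (opNorm_nonneg _)]
    rw [h1, h4]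
    calc (fun i => x i) ⬝ᵥ ((M * Mᵀ) *ᵥ (fun i => x i))
        ≤ |(fun i => x i) ⬝ᵥ ((M * Mᵀ) *ᵥ (fun i => x i))| := le_abs_self _
      _ ≤ opNorm (M * Mᵀ) * ((fun i => x i) ⬝ᵥ (fun i => x i)) := h2
      _ = opNorm (M * Mᵀ) * ‖x‖ ^ 2 := by rw [h3]
  exact le_of_pow_le_pow_left₀ two_ne_zero (by positivity) hsq

lemma opNorm_orth_le_one (W : Matrix (Fin m) (Fin m) ℝ) (hW : Wᵀ * W = 1) :
    opNorm W ≤ 1 := by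
  apply opNorm_le_bound _ zero_le_one
  intro x
  have h : ‖Matrix.toEuclideanLin W x‖ ^ 2 = ‖x‖ ^ 2 := by
    rw [norm_toEuclideanLin_sq, hW, Matrix.one_mulVec, ← euclid_norm_sq]
  rw [one_mul]
  exact le_of_pow_le_pow_left₀ two_ne_zero (norm_nonneg x) h.le

/-! ### Hermitian matrices: eigenvalue bounds for the operator norm -/

lemma tl_eigen (A : Matrix (Fin k) (Fin k) ℝ) (hA : A.IsHermitian) (i : Fin k) :
    Matrix.toEuclideanLin A (hA.eigenvectorBasis i)
      = hA.eigenvalues i • hA.eigenvectorBasis i := by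
  have h := hA.mulVec_eigenvectorBasis i
  rw [Matrix.toEuclideanLin_apply]
  apply (WithLp.equiv 2 _).symm_apply_eq.mpr
  simpa using h

lemma repr_tl (A : Matrix (Fin k) (Fin k) ℝ) (hA : A.IsHermitian)
    (v : EuclideanSpace ℝ (Fin k)) (i : Fin k) :
    hA.eigenvectorBasis.repr (Matrix.toEuclideanLin A v) i
      = hA.eigenvalues i * hA.eigenvectorBasis.repr v i := by
  rw [OrthonormalBasis.repr_apply_apply, OrthonormalBasis.repr_apply_apply]
  have hsymm := (Matrix.isHermitian_iff_isSymmetric.mp hA)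
  rw [← hsymm (hA.eigenvectorBasis i) v, tl_eigen A hA i, real_inner_smul_left]

lemma euclid_norm_sq_sum (x : EuclideanSpace ℝ (Fin k)) : ‖x‖ ^ 2 = ∑ i, (x i) ^ 2 := by
  rw [← real_inner_self_eq_norm_sq, PiLp.inner_apply]
  simp [pow_two]

lemma herm_opNorm_le {A : Matrix (Fin k) (Fin k) ℝ} (hA : A.IsHermitian) {c : ℝ}
    (hc : 0 ≤ c) (h : ∀ i, |hA.eigenvalues i| ≤ c) :
    opNorm A ≤ c := by
  apply ContinuousLinearMap.opNorm_le_bound _ hc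
  intro v
  have key : ‖Matrix.toEuclideanLin A v‖ ^ 2 ≤ (c * ‖v‖) ^ 2 := by
    rw [← hA.eigenvectorBasis.repr.norm_map (Matrix.toEuclideanLin A v),
      euclid_norm_sq_sum, ← hA.eigenvectorBasis.repr.norm_map v, mul_pow,
      euclid_norm_sq_sum (hA.eigenvectorBasis.repr v), Finset.mul_sum]
    apply Finset.sum_le_sum
    intro i _
    rw [repr_tl A hA v i, mul_pow]
    apply mul_le_mul_of_nonneg_right _ (sq_nonneg _)
    calc hA.eigenvalues i ^ 2 = |hA.eigenvalues i| ^ 2 := (sq_abs _).symm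
      _ ≤ c ^ 2 := by
          apply pow_le_pow_left₀ (abs_nonneg _) (h i)
  exact le_of_pow_le_pow_left₀ two_ne_zero (by positivity) key

lemma herm_opNorm_lower {A : Matrix (Fin k) (Fin k) ℝ} (hA : A.IsHermitian) {c : ℝ}
    (hc : 0 ≤ c) (h : ∀ i, c ≤ |hA.eigenvalues i|) (v : EuclideanSpace ℝ (Fin k)) :
    c * ‖v‖ ≤ ‖Matrix.toEuclideanLin A v‖ := by
  have key : (c * ‖v‖) ^ 2 ≤ ‖Matrix.toEuclideanLin A v‖ ^ 2 := by
    rw [← hA.eigenvectorBasis.repr.norm_map (Matrix.toEuclideanLin A v),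
      euclid_norm_sq_sum, ← hA.eigenvectorBasis.repr.norm_map v, mul_pow,
      euclid_norm_sq_sum (hA.eigenvectorBasis.repr v), Finset.mul_sum]
    apply Finset.sum_le_sum
    intro i _
    rw [repr_tl A hA v i, mul_pow]
    apply mul_le_mul_of_nonneg_right _ (sq_nonneg _)
    calc c ^ 2 ≤ |hA.eigenvalues i| ^ 2 := pow_le_pow_left₀ hc (h i) 2
      _ = hA.eigenvalues i ^ 2 := sq_abs _
  exact le_of_pow_le_pow_left₀ two_ne_zero (norm_nonneg _) key

/-! ### Injectivity and positive definiteness from full rank -/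

lemma mulVec_injective_of_rank {n d : ℕ} {Zt : Matrix (Fin n) (Fin d) ℝ} (hZt : Zt.rank = d) :
    ∀ x : Fin d → ℝ, Zt *ᵥ x = 0 → x = 0 := by
  have hker : LinearMap.ker Zt.mulVecLin = ⊥ := by
    have h1 := Zt.mulVecLin.finrank_range_add_finrank_ker
    have h2 : Module.finrank ℝ (LinearMap.range Zt.mulVecLin) = d := hZt
    rw [h2] at h1
    simp only [Module.finrank_pi, Fintype.card_fin] at h1
    have h3 : Module.finrank ℝ (LinearMap.ker Zt.mulVecLin) = 0 := by omega
    exact Submodule.finrank_eq_zero.mp h3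
  intro x hx
  have : x ∈ LinearMap.ker Zt.mulVecLin := hx
  rw [hker] at this
  simpa using this

lemma posDef_of_rank {n d : ℕ} {Zt : Matrix (Fin n) (Fin d) ℝ} (hZt : Zt.rank = d)
    (hHerm : (Ztᵀ * Zt).IsHermitian) : (Ztᵀ * Zt).PosDef := by
  refine Matrix.PosDef.of_dotProduct_mulVec_pos hHerm fun x hx => ?_
  have hZx : Zt *ᵥ x ≠ 0 := fun h => hx (mulVec_injective_of_rank hZt x h)
  have hdot : star x ⬝ᵥ ((Ztᵀ * Zt) *ᵥ x) = (Zt *ᵥ x) ⬝ᵥ (Zt *ᵥ x) := by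
    rw [star_trivial, ← Matrix.mulVec_mulVec, dotProduct_comm, dot_transpose]
  rw [hdot]
  have h1 : 0 ≤ (Zt *ᵥ x) ⬝ᵥ (Zt *ᵥ x) := Finset.sum_nonneg fun i _ => mul_self_nonneg _
  have h2 : (Zt *ᵥ x) ⬝ᵥ (Zt *ᵥ x) ≠ 0 := by
    exact fun h => hZx (dotProduct_self_eq_zero.mp h)
  exact lt_of_le_of_ne h1 (Ne.symm h2)

/-! ### Existence of an isometric (orthogonal) factor -/

lemma exists_isometry_factor (K S : Matrix (Fin k) (Fin k) ℝ)
    (h : ∀ x : EuclideanSpace ℝ (Fin k),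
      ‖Matrix.toEuclideanLin S x‖ = ‖Matrix.toEuclideanLin K x‖) :
    ∃ U : Matrix (Fin k) (Fin k) ℝ, Uᵀ * U = 1 ∧ U * S = K := by
  set E := EuclideanSpace ℝ (Fin k)
  set s : E →ₗ[ℝ] E := Matrix.toEuclideanLin S with hs
  set kk : E →ₗ[ℝ] E := Matrix.toEuclideanLin K with hk
  have hker : LinearMap.ker s ≤ LinearMap.ker kk := by
    intro x hx
    rw [LinearMap.mem_ker] at hx ⊢
    have := h x
    rw [hx, norm_zero] at this
    exact (norm_eq_zero.mp this.symm)
  set L0 : (E ⧸ LinearMap.ker s) →ₗ[ℝ] E := (LinearMap.ker s).liftQ kk hker with hL0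
  set e := s.quotKerEquivRange with he
  set L1 : (LinearMap.range s) →ₗ[ℝ] E := L0 ∘ₗ (e.symm : LinearMap.range s ≃ₗ[ℝ] _) with hL1
  have hL1val : ∀ (x : E) (mem : s x ∈ LinearMap.range s), L1 ⟨s x, mem⟩ = kk x := by
    intro x mem
    have h1 : e (Submodule.Quotient.mk x) = ⟨s x, mem⟩ := by
      apply Subtype.ext
      exact s.quotKerEquivRange_apply_mk x
    have h2 : e.symm ⟨s x, mem⟩ = Submodule.Quotient.mk x := by
      rw [← h1, LinearEquiv.symm_apply_apply]
    simp only [hL1, LinearMap.comp_apply, LinearEquiv.coe_coe, h2]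
    exact Submodule.liftQ_apply _ kk x
  have hL1iso : ∀ w : LinearMap.range s, ‖L1 w‖ = ‖w‖ := by
    rintro ⟨w, hw⟩
    obtain ⟨x, hx⟩ := hw
    subst hx
    rw [hL1val x ⟨x, rfl⟩]
    show ‖kk x‖ = ‖s x‖
    exact (h x).symm
  set LI : (LinearMap.range s) →ₗᵢ[ℝ] E := ⟨L1, hL1iso⟩ with hLI
  set U' := LI.extend with hU'
  have hU'app : ∀ x : E, U' (s x) = kk x := by
    intro x
    have mem : s x ∈ LinearMap.range s := ⟨x, rfl⟩
    have : U' ((⟨s x, mem⟩ : LinearMap.range s) : E) = LI ⟨s x, mem⟩ :=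
      LinearIsometry.extend_apply LI ⟨s x, mem⟩
    simpa [hLI, hL1val x mem] using this
  set MU : Matrix (Fin k) (Fin k) ℝ := Matrix.toEuclideanLin.symm U'.toLinearMap with hMU
  have hMUapp : ∀ x : E, Matrix.toEuclideanLin MU x = U' x := by
    intro x
    rw [hMU, Matrix.toEuclideanLin.apply_symm_apply]
    rfl
  have hMS : MU * S = K := by
    apply Matrix.toEuclideanLin.injective
    apply LinearMap.ext
    intro x
    show Matrix.toEuclideanLin (MU * S) x = kk x
    have : Matrix.toEuclideanLin (MU * S) x
        = Matrix.toEuclideanLin MU (Matrix.toEuclideanLin S x) := by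
      simp [Matrix.toEuclideanLin_apply, Matrix.mulVec_mulVec]
    rw [this, hMUapp, hU'app]
  have hMUU : MUᵀ * MU = 1 := by
    ext i j
    have hcol : ∀ (l : Fin k) (a : Fin k),
        MU a l = (U' (EuclideanSpace.single l 1)) a := by
      intro l a
      rw [← hMUapp, Matrix.toEuclideanLin_apply]
      simp [Matrix.mulVec_single]
    have hinner : (inner ℝ (U' (EuclideanSpace.single i 1)) (U' (EuclideanSpace.single j 1)) : ℝ)
        = inner ℝ (EuclideanSpace.single i (1:ℝ)) (EuclideanSpace.single j (1:ℝ)) :=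
      U'.inner_map_map _ _
    have hl : (MUᵀ * MU) i j
        = (inner ℝ (U' (EuclideanSpace.single i 1)) (U' (EuclideanSpace.single j 1)) : ℝ) := by
      rw [PiLp.inner_apply]
      simp only [Matrix.mul_apply, Matrix.transpose_apply, RCLike.inner_apply, conj_trivial]
      apply Finset.sum_congr rfl
      intro a _
      rw [hcol i a, hcol j a, mul_comm]
    rw [hl, hinner, EuclideanSpace.inner_single_left]
    simp [EuclideanSpace.single_apply, Matrix.one_apply, eq_comm]
  exact ⟨MU, hMUU, hMS⟩

/-! ### The key perturbation bound -/

lemma key_bound {n d : ℕ} (Z Zt : Matrix (Fin n) (Fin d) ℝ)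
    {S : Matrix (Fin d) (Fin d) ℝ} (hS : S.PosSemidef)
    (hsq : S * S = Ztᵀ * (Z * Zᵀ) * Zt) :
    opNorm (S - Ztᵀ * Zt) ≤ opNorm (Z * Zᵀ - Zt * Ztᵀ) := by
  set T : Matrix (Fin d) (Fin d) ℝ := Ztᵀ * Zt with hTdef
  set E : Matrix (Fin n) (Fin n) ℝ := Z * Zᵀ - Zt * Ztᵀ with hEdef
  have hSsym : Sᵀ = S := by
    have := hS.1
    rwa [Matrix.IsHermitian, Matrix.conjTranspose_eq_transpose_of_trivial] at this
  have hTherm : T.IsHermitian := by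
    have := Matrix.isHermitian_conjTranspose_mul_self Zt
    rwa [Matrix.conjTranspose_eq_transpose_of_trivial] at this
  have hTsym : Tᵀ = T := by
    have := hTherm
    rwa [Matrix.IsHermitian, Matrix.conjTranspose_eq_transpose_of_trivial] at this
  have hD : (S - T).IsHermitian := hS.1.sub hTherm
  apply herm_opNorm_le hD (opNorm_nonneg E)
  intro i
  set μ := hD.eigenvalues i with hμ
  set xE := hD.eigenvectorBasis i with hxE
  set x : Fin d → ℝ := fun l => xE l with hx
  have hx1 : (S - T) *ᵥ x = μ • x := hD.mulVec_eigenvectorBasis i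
  have hxnorm : x ⬝ᵥ x = 1 := by
    have h1 : ‖xE‖ = 1 := hD.eigenvectorBasis.orthonormal.1 i
    have h2 := euclid_norm_sq xE
    rw [h1] at h2
    simpa using h2.symm
  have hSx : S *ᵥ x = T *ᵥ x + μ • x := by
    rw [Matrix.sub_mulVec] at hx1
    rw [sub_eq_iff_eq_add.mp hx1, add_comm]
  set u : Fin n → ℝ := Zt *ᵥ x with hu
  set a : ℝ := x ⬝ᵥ (T *ᵥ x) with ha
  set sg : ℝ := x ⬝ᵥ (S *ᵥ x) with hsg
  have hTx : a = u ⬝ᵥ u := by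
    have hTv : T *ᵥ x = Ztᵀ *ᵥ u := by rw [hTdef, ← Matrix.mulVec_mulVec]
    rw [ha, hTv, dotProduct_comm, dot_transpose]
  have hSxx : 0 ≤ sg := by
    have := hS.dotProduct_mulVec_nonneg x
    rwa [star_trivial] at this
  have huu : 0 ≤ u ⬝ᵥ u := Finset.sum_nonneg fun l _ => mul_self_nonneg _
  have ha0 : 0 ≤ a := hTx ▸ huu
  have hdotS : ∀ w, x ⬝ᵥ (S *ᵥ w) = (S *ᵥ x) ⬝ᵥ w := by
    intro w
    rw [← dot_transpose S x w, hSsym]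
  have hdotT : ∀ w, x ⬝ᵥ (T *ᵥ w) = (T *ᵥ x) ⬝ᵥ w := by
    intro w
    rw [← dot_transpose T x w, hTsym]
  have hA1 : x ⬝ᵥ ((S * S) *ᵥ x) = (S *ᵥ x) ⬝ᵥ (S *ᵥ x) := by
    rw [← Matrix.mulVec_mulVec]
    exact hdotS (S *ᵥ x)
  have hA2 : x ⬝ᵥ ((T * T) *ᵥ x) = (T *ᵥ x) ⬝ᵥ (T *ᵥ x) := by
    rw [← Matrix.mulVec_mulVec]
    exact hdotT (T *ᵥ x)
  have hmat : S * S - T * T = Ztᵀ * E * Zt := by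
    have h5 : Ztᵀ * Zt * (Ztᵀ * Zt) = Ztᵀ * (Zt * Ztᵀ) * Zt := by
      rw [Matrix.mul_assoc Ztᵀ Zt (Ztᵀ * Zt), ← Matrix.mul_assoc Zt Ztᵀ Zt, ← Matrix.mul_assoc]
    rw [hsq, hTdef, h5, hEdef, ← Matrix.sub_mul, ← Matrix.mul_sub]
  have hquad : x ⬝ᵥ ((Ztᵀ * E * Zt) *ᵥ x) = u ⬝ᵥ (E *ᵥ u) := by
    have hv : (Ztᵀ * E * Zt) *ᵥ x = Ztᵀ *ᵥ (E *ᵥ u) := by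
      rw [hu, Matrix.mulVec_mulVec, Matrix.mulVec_mulVec]
    rw [hv, dotProduct_comm, dot_transpose, ← hu, dotProduct_comm]
  have hs_eq : sg = a + μ := by
    rw [hsg, hSx, dotProduct_add, dotProduct_smul, smul_eq_mul, hxnorm, ← ha,
      mul_one]
  have hcross : x ⬝ᵥ (μ • x) = μ := by
    rw [dotProduct_smul, smul_eq_mul, hxnorm, mul_one]
  have hcomm : (T *ᵥ x) ⬝ᵥ x = a := by rw [ha, dotProduct_comm]
  have hexp : (S *ᵥ x) ⬝ᵥ (S *ᵥ x) - (T *ᵥ x) ⬝ᵥ (T *ᵥ x) = μ * (sg + a) := by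
    rw [hSx]
    simp only [add_dotProduct, dotProduct_add, smul_dotProduct,
      dotProduct_smul, smul_eq_mul]
    rw [hcomm, hxnorm, ← ha, hs_eq]
    ring
  have hiden : μ * (sg + a) = u ⬝ᵥ (E *ᵥ u) := by
    rw [← hexp, ← hA1, ← hA2, ← hquad, ← hmat, Matrix.sub_mulVec, dotProduct_sub]
  have habs : |u ⬝ᵥ (E *ᵥ u)| ≤ opNorm E * a := by
    rw [hTx]
    exact dot_mulVec_abs_le E u
  rcases eq_or_lt_of_le (by linarith : (0:ℝ) ≤ sg + a) with hp | hp
  · have hs0 : sg = 0 := by linarith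
    have ha00 : a = 0 := by linarith
    have : μ = 0 := by rw [hs_eq] at hs0; linarith
    rw [this, abs_zero]
    exact opNorm_nonneg E
  · have h1 : |μ| * (sg + a) = |u ⬝ᵥ (E *ᵥ u)| := by
      rw [← hiden, abs_mul, abs_of_pos hp]
    have h2 : |μ| * (sg + a) ≤ opNorm E * (sg + a) := by
      rw [h1]
      calc |u ⬝ᵥ (E *ᵥ u)| ≤ opNorm E * a := habs
        _ ≤ opNorm E * (sg + a) := by
            apply mul_le_mul_of_nonneg_left _ (opNorm_nonneg E)
            linarith
    exact le_of_mul_le_mul_right h2 hp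

end ProofAux

theorem stmt9 {n d : ℕ} (hd : 0 < d)
    (Z Zt : Matrix (Fin n) (Fin d) ℝ)
    (hZ : Z.rank = d) (hZt : Zt.rank = d)
    (hHerm : (Ztᵀ * Zt).IsHermitian)
    (lam : ℝ) (hlam : lam = ⨅ i, hHerm.eigenvalues i) :
    ∃ W : Matrix (Fin d) (Fin d) ℝ, Wᵀ * W = 1 ∧
      opNorm (Z * Wᵀ - Zt) ≤
        opNorm (Z * Zᵀ - Zt * Ztᵀ) *
          (Real.sqrt (opNorm (Z * Zᵀ)) + Real.sqrt (opNorm (Zt * Ztᵀ))) / lam := by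
  haveI : Nonempty (Fin d) := ⟨⟨0, hd⟩⟩
  set T : Matrix (Fin d) (Fin d) ℝ := Ztᵀ * Zt with hTdef
  have hT : T.PosDef := ProofAux.posDef_of_rank hZt hHerm
  have hlam_le : ∀ i, lam ≤ hHerm.eigenvalues i := by
    intro i
    rw [hlam]
    exact ciInf_le (Finite.bddBelow_range _) i
  have hlam_pos : 0 < lam := by
    obtain ⟨i0, hi0⟩ := exists_eq_ciInf_of_finite (f := fun i => hHerm.eigenvalues i)
    rw [hlam, ← hi0]
    exact hT.eigenvalues_pos i0
  set K : Matrix (Fin d) (Fin d) ℝ := Zᵀ * Zt with hKdef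
  have hKK : Kᵀ * K = Ztᵀ * (Z * Zᵀ) * Zt := by
    rw [hKdef, Matrix.transpose_mul, Matrix.transpose_transpose,
      Matrix.mul_assoc Ztᵀ Z (Zᵀ * Zt), ← Matrix.mul_assoc Z Zᵀ Zt, ← Matrix.mul_assoc]
  have hG : (Kᵀ * K).PosSemidef := by
    have := Matrix.posSemidef_conjTranspose_mul_self K
    rwa [Matrix.conjTranspose_eq_transpose_of_trivial] at this
  open scoped MatrixOrder in set S0 := CFC.sqrt (Kᵀ * K) with hS0def
  have hS0ps : S0.PosSemidef := open scoped MatrixOrder in (CFC.sqrt_nonneg (Kᵀ * K)).posSemidef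
  have hS0sq : S0 * S0 = Kᵀ * K := open scoped MatrixOrder in CFC.sqrt_mul_sqrt_self (Kᵀ * K) hG.nonneg
  have hS0sym : S0ᵀ = S0 := by
    have := hS0ps.1
    rwa [Matrix.IsHermitian, Matrix.conjTranspose_eq_transpose_of_trivial] at this
  have hnorm : ∀ x : EuclideanSpace ℝ (Fin d),
      ‖Matrix.toEuclideanLin S0 x‖ = ‖Matrix.toEuclideanLin K x‖ := by
    intro x
    have h1 : ‖Matrix.toEuclideanLin S0 x‖ ^ 2 = ‖Matrix.toEuclideanLin K x‖ ^ 2 := by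
      rw [ProofAux.norm_toEuclideanLin_sq, ProofAux.norm_toEuclideanLin_sq, hS0sym, hS0sq]
    have h2 := congrArg Real.sqrt h1
    rwa [Real.sqrt_sq (norm_nonneg _), Real.sqrt_sq (norm_nonneg _)] at h2
  obtain ⟨U, hUU, hUS⟩ := ProofAux.exists_isometry_factor K S0 hnorm
  refine ⟨Uᵀ, ?_, ?_⟩
  · rw [Matrix.transpose_transpose]
    exact mul_eq_one_comm.mp hUU
  rw [Matrix.transpose_transpose]
  set E : Matrix (Fin n) (Fin n) ℝ := Z * Zᵀ - Zt * Ztᵀ with hEdef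
  set X : Matrix (Fin n) (Fin d) ℝ := Z * U - Zt with hXdef
  have hZUS : Z * U * S0 = Z * Zᵀ * Zt := by
    rw [Matrix.mul_assoc, hUS, hKdef, ← Matrix.mul_assoc]
  have hid : X * T = E * Zt - Z * U * (S0 - T) := by
    rw [hXdef, hEdef, hTdef, Matrix.sub_mul, Matrix.mul_sub, Matrix.sub_mul, hZUS,
      ← Matrix.mul_assoc Zt Ztᵀ Zt]
    abel
  have hdet : IsUnit T.det := hT.det_pos.ne'.isUnit
  have hTlow : ∀ v : EuclideanSpace ℝ (Fin d), lam * ‖v‖ ≤ ‖Matrix.toEuclideanLin T v‖ :=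
    ProofAux.herm_opNorm_lower hHerm hlam_pos.le (fun i => by
      rw [abs_of_pos (hT.eigenvalues_pos i)]
      exact hlam_le i)
  have hTinv : opNorm T⁻¹ ≤ 1 / lam := by
    apply ProofAux.opNorm_le_bound _ (by positivity)
    intro v
    have hw := hTlow (Matrix.toEuclideanLin T⁻¹ v)
    have hTv : Matrix.toEuclideanLin T (Matrix.toEuclideanLin T⁻¹ v) = v := by
      rw [← ProofAux.toEuclideanLin_mul, Matrix.mul_nonsing_inv _ hdet]
      simp [Matrix.toEuclideanLin_apply, Matrix.one_mulVec]
    rw [hTv] at hw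
    rw [div_mul_eq_mul_div, le_div_iff₀ hlam_pos]
    nlinarith [hw]
  have hXbound : opNorm X ≤ opNorm (X * T) * (1 / lam) := by
    calc opNorm X = opNorm (X * T * T⁻¹) := by
          rw [Matrix.mul_nonsing_inv_cancel_right T X hdet]
      _ ≤ opNorm (X * T) * opNorm T⁻¹ := ProofAux.opNorm_mul_le _ _
      _ ≤ opNorm (X * T) * (1 / lam) :=
          mul_le_mul_of_nonneg_left hTinv (ProofAux.opNorm_nonneg _)
  have hkey : opNorm (S0 - T) ≤ opNorm E := by
    rw [hTdef, hEdef]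
    exact ProofAux.key_bound Z Zt hS0ps (hS0sq.trans hKK)
  have hU1 : opNorm U ≤ 1 := ProofAux.opNorm_orth_le_one U hUU
  have hZt_s : opNorm Zt ≤ Real.sqrt (opNorm (Zt * Ztᵀ)) := ProofAux.opNorm_le_sqrt Zt
  have hZ_s : opNorm Z ≤ Real.sqrt (opNorm (Z * Zᵀ)) := ProofAux.opNorm_le_sqrt Z
  have hXT : opNorm (X * T)
      ≤ opNorm E * (Real.sqrt (opNorm (Z * Zᵀ)) + Real.sqrt (opNorm (Zt * Ztᵀ))) := by
    rw [hid]
    calc opNorm (E * Zt - Z * U * (S0 - T))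
        ≤ opNorm (E * Zt) + opNorm (Z * U * (S0 - T)) := ProofAux.opNorm_sub_le _ _
      _ ≤ opNorm E * opNorm Zt + opNorm (Z * U) * opNorm (S0 - T) :=
          add_le_add (ProofAux.opNorm_mul_le _ _) (ProofAux.opNorm_mul_le _ _)
      _ ≤ opNorm E * Real.sqrt (opNorm (Zt * Ztᵀ)) + (opNorm Z * 1) * opNorm E := by
          apply add_le_add
          · exact mul_le_mul_of_nonneg_left hZt_s (ProofAux.opNorm_nonneg E)
          · apply mul_le_mul ?_ hkey (ProofAux.opNorm_nonneg _)
              (mul_nonneg (ProofAux.opNorm_nonneg Z) zero_le_one)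
            calc opNorm (Z * U) ≤ opNorm Z * opNorm U := ProofAux.opNorm_mul_le _ _
              _ ≤ opNorm Z * 1 := mul_le_mul_of_nonneg_left hU1 (ProofAux.opNorm_nonneg Z)
      _ ≤ opNorm E * Real.sqrt (opNorm (Zt * Ztᵀ))
            + Real.sqrt (opNorm (Z * Zᵀ)) * opNorm E := by
          apply add_le_add_right
          apply mul_le_mul_of_nonneg_right _ (ProofAux.opNorm_nonneg E)
          rw [mul_one]
          exact hZ_s
      _ = opNorm E * (Real.sqrt (opNorm (Z * Zᵀ)) + Real.sqrt (opNorm (Zt * Ztᵀ))) := by ring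
  calc opNorm X ≤ opNorm (X * T) * (1 / lam) := hXbound
    _ ≤ opNorm E * (Real.sqrt (opNorm (Z * Zᵀ)) + Real.sqrt (opNorm (Zt * Ztᵀ))) * (1 / lam) :=
        mul_le_mul_of_nonneg_right hXT (by positivity)
    _ = opNorm E * (Real.sqrt (opNorm (Z * Zᵀ)) + Real.sqrt (opNorm (Zt * Ztᵀ))) / lam := by
        rw [mul_one_div]
end
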